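/- arXiv:2401.03051 — 11 statements merged into one kernel-verified Lean document; each statement's English description precedes it below -/
import Mathlib

section
/- For every t ≥ 0 and every β ∈ R^K and λ ∈ R, the t-th iterate of the SUCPA map satisfies f^{(t)}(β + λ·1) = f^{(t)}(β) + λ·1. -/
open Real Finset

/-- The SUCPA map: `f k β = -log((1/N_k) Σ_i P_{i,k} / (Σ_j P_{i,j} e^{β_j}))`. -/
noncomputable def sucpa {N K : ℕ} (P : Fin N → Fin K → ℝ) (Nk : Fin K → ℕ)
    (β : Fin K → ℝ) : Fin K → ℝ :=
  fun k => -Real.log ((1 / (Nk k : ℝ)) * ∑ i, P i k / ∑ j, P i j * Real.exp (β j))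

lemma sucpa_equivariant {N K : ℕ} (hK : 2 ≤ K) (hN : 1 ≤ N)
    (Nk : Fin K → ℕ) (hNk : ∀ k, 0 < Nk k)
    (P : Fin N → Fin K → ℝ) (hP : ∀ i k, 0 < P i k)
    (β : Fin K → ℝ) (lam : ℝ) :
    sucpa P Nk (β + fun _ => lam) = sucpa P Nk β + fun _ => lam := by
  have hKpos : 0 < K := by omega
  have hD : ∀ i, 0 < ∑ j, P i j * Real.exp (β j) := by
    intro i
    apply Finset.sum_pos (fun j _ => mul_pos (hP i j) (Real.exp_pos _))
    exact univ_nonempty_iff.mpr ⟨⟨0, hKpos⟩⟩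
  funext k
  simp only [sucpa, Pi.add_apply]
  have hsum : ∀ i, ∑ j, P i j * Real.exp (β j + lam)
      = Real.exp lam * ∑ j, P i j * Real.exp (β j) := by
    intro i
    rw [Finset.mul_sum]
    refine Finset.sum_congr rfl fun j _ => ?_
    rw [Real.exp_add]
    ring
  have h1 : (∑ i, P i k / ∑ j, P i j * Real.exp (β j + lam))
      = Real.exp (-lam) * ∑ i, P i k / ∑ j, P i j * Real.exp (β j) := by
    rw [Finset.mul_sum]
    refine Finset.sum_congr rfl fun i _ => ?_
    rw [hsum i, Real.exp_neg]
    have := (hD i).ne'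
    field_simp
  rw [h1]
  have hS : 0 < ∑ i, P i k / ∑ j, P i j * Real.exp (β j) := by
    apply Finset.sum_pos (fun i _ => div_pos (hP i k) (hD i))
    exact univ_nonempty_iff.mpr ⟨⟨0, hN⟩⟩
  have hNkpos := hNk k
  have hx : (1 / (Nk k : ℝ)) * ∑ i, P i k / ∑ j, P i j * Real.exp (β j) ≠ 0 := by
    positivity
  rw [mul_left_comm, Real.log_mul (Real.exp_ne_zero _) hx, Real.log_exp]
  ring

theorem sucpa_iterate_equivariant {N K : ℕ} (hK : 2 ≤ K) (hN : 1 ≤ N)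
    (Nk : Fin K → ℕ) (hNk : ∀ k, 0 < Nk k) (hNsum : ∑ k, Nk k = N)
    (P : Fin N → Fin K → ℝ) (hP : ∀ i k, 0 < P i k) (hProw : ∀ i, ∑ k, P i k = 1)
    (t : ℕ) (β : Fin K → ℝ) (lam : ℝ) :
    (sucpa P Nk)^[t] (β + fun _ => lam) = (sucpa P Nk)^[t] β + fun _ => lam := by
  induction t generalizing β with
  | zero => simp
  | succ n ih =>
    rw [Function.iterate_succ_apply, Function.iterate_succ_apply,
      sucpa_equivariant hK hN Nk hNk P hP β lam, ih]
end

section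
/- Each entry of the Jacobian matrix of the SUCPA map is strictly positive: for all β ∈ R^K and all k, ℓ, the partial derivative ∂f_k/∂β_ℓ(β) equals [Σ_i P_{i,k} P_{i,ℓ} e^{β_ℓ} / (Σ_j P_{i,j} e^{β_j})^2] / [Σ_i P_{i,k} / (Σ_j P_{i,j} e^{β_j})] and is > 0. -/
open Real Finset

theorem sucpa_jacobian_entries_pos {N K : ℕ} (hK : 2 ≤ K) (hN : 1 ≤ N)
    (Nk : Fin K → ℕ) (hNk : ∀ k, 0 < Nk k) (hNsum : ∑ k, Nk k = N)
    (P : Fin N → Fin K → ℝ) (hP : ∀ i k, 0 < P i k) (hProw : ∀ i, ∑ k, P i k = 1)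
    (β : Fin K → ℝ) (k l : Fin K) :
    HasDerivAt (fun x : ℝ => sucpa P Nk (Function.update β l x) k)
      ((∑ i, P i k * P i l * Real.exp (β l) / (∑ j, P i j * Real.exp (β j)) ^ 2) /
        (∑ i, P i k / ∑ j, P i j * Real.exp (β j))) (β l) ∧
    0 < (∑ i, P i k * P i l * Real.exp (β l) / (∑ j, P i j * Real.exp (β j)) ^ 2) /
        (∑ i, P i k / ∑ j, P i j * Real.exp (β j)) := by
  haveI : Nonempty (Fin N) := Fin.pos_iff_nonempty.mp hN
  haveI : Nonempty (Fin K) := Fin.pos_iff_nonempty.mp (by omega)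
  set S : Fin N → ℝ → ℝ := fun i x => ∑ j, P i j * Real.exp (Function.update β l x j) with hSdef
  have hSpos : ∀ i x, 0 < S i x := fun i x =>
    Finset.sum_pos (fun j _ => mul_pos (hP i j) (Real.exp_pos _)) univ_nonempty
  have hSβ : ∀ i, S i (β l) = ∑ j, P i j * Real.exp (β j) := by
    intro i; simp [hSdef, Function.update_eq_self]
  -- positivity
  have hDenpos : 0 < ∑ i, P i k / ∑ j, P i j * Real.exp (β j) := by
    refine Finset.sum_pos (fun i _ => div_pos (hP i k) ?_) univ_nonempty
    rw [← hSβ i]; exact hSpos i (β l)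
  have hNumpos : 0 < ∑ i, P i k * P i l * Real.exp (β l) / (∑ j, P i j * Real.exp (β j)) ^ 2 := by
    refine Finset.sum_pos (fun i _ => div_pos ?_ ?_) univ_nonempty
    · exact mul_pos (mul_pos (hP i k) (hP i l)) (Real.exp_pos _)
    · have h := hSpos i (β l); rw [hSβ i] at h; positivity
  refine ⟨?_, div_pos hNumpos hDenpos⟩
  -- derivative of S i
  have hSder : ∀ i (x : ℝ), HasDerivAt (fun x => S i x) (P i l * Real.exp x) x := by
    intro i x
    have h1 : ∀ j : Fin K, HasDerivAt (fun x => P i j * Real.exp (Function.update β l x j))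
        (if j = l then P i l * Real.exp x else 0) x := by
      intro j
      by_cases h : j = l
      · subst h
        simp only [Function.update_self, if_pos rfl]
        exact (Real.hasDerivAt_exp x).const_mul (P i j)
      · simp only [Function.update_of_ne h, if_neg h]
        exact hasDerivAt_const x _
    have h2 := HasDerivAt.fun_sum (fun j (_ : j ∈ Finset.univ) => h1 j)
    simpa using h2
  -- derivative of g x = ∑ i, P i k / S i x
  have hgder : HasDerivAt (fun x => ∑ i, P i k / S i x)
      (∑ i, -(P i k * (P i l * Real.exp (β l))) / (S i (β l)) ^ 2) (β l) := by
    refine HasDerivAt.fun_sum (fun i _ => ?_)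
    have := (hasDerivAt_const (β l) (P i k)).fun_div (hSder i (β l)) (hSpos i (β l)).ne'
    simpa using this
  have hgpos : 0 < ∑ i, P i k / S i (β l) := by
    refine Finset.sum_pos (fun i _ => div_pos (hP i k) (hSpos i (β l))) univ_nonempty
  have hc : (0:ℝ) < 1 / (Nk k : ℝ) := by
    have := hNk k; positivity
  have hmul : HasDerivAt (fun x => (1 / (Nk k : ℝ)) * ∑ i, P i k / S i x)
      ((1 / (Nk k : ℝ)) * ∑ i, -(P i k * (P i l * Real.exp (β l))) / (S i (β l)) ^ 2) (β l) :=
    hgder.const_mul _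
  have hne : (1 / (Nk k : ℝ)) * ∑ i, P i k / S i (β l) ≠ 0 :=
    (mul_pos hc hgpos).ne'
  have hlog := (hmul.log hne).neg
  have heq : -(((1 / (Nk k : ℝ)) * ∑ i, -(P i k * (P i l * Real.exp (β l))) / (S i (β l)) ^ 2) /
      ((1 / (Nk k : ℝ)) * ∑ i, P i k / S i (β l))) =
      (∑ i, P i k * P i l * Real.exp (β l) / (∑ j, P i j * Real.exp (β j)) ^ 2) /
        (∑ i, P i k / ∑ j, P i j * Real.exp (β j)) := by
    rw [mul_div_mul_left _ _ hc.ne']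
    have h1 : (∑ i, -(P i k * (P i l * Real.exp (β l))) / (S i (β l)) ^ 2)
        = -(∑ i, P i k * P i l * Real.exp (β l) / (∑ j, P i j * Real.exp (β j)) ^ 2) := by
      rw [← Finset.sum_neg_distrib]
      refine Finset.sum_congr rfl (fun i _ => ?_)
      rw [hSβ i, neg_div, mul_assoc]
    have h2 : (∑ i, P i k / S i (β l)) = ∑ i, P i k / ∑ j, P i j * Real.exp (β j) :=
      Finset.sum_congr rfl (fun i _ => by rw [hSβ i])
    rw [h1, h2, neg_div, neg_neg]
  rw [heq] at hlog
  have hfun : (fun x : ℝ => sucpa P Nk (Function.update β l x) k) =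
      fun x => -Real.log ((1 / (Nk k : ℝ)) * ∑ i, P i k / S i x) := rfl
  rw [hfun]
  exact hlog
end

section
/- Along any orbit of the SUCPA algorithm, the increments Δ_k(t) = β_k^{[t+1]} - β_k^{[t]} satisfy the balance identity Σ_{k=1}^K N_k e^{-Δ_k(t)} = N. -/
open Real Finset

theorem sucpa_increment_balance {N K : ℕ} (hK : 2 ≤ K) (hN : 1 ≤ N)
    (Nk : Fin K → ℕ) (hNk : ∀ k, 0 < Nk k) (hNsum : ∑ k, Nk k = N)
    (P : Fin N → Fin K → ℝ) (hP : ∀ i k, 0 < P i k) (hProw : ∀ i, ∑ k, P i k = 1)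
    (β : Fin K → ℝ) :
    ∑ k, (Nk k : ℝ) * Real.exp (-(sucpa P Nk β k - β k)) = (N : ℝ) := by
  have hKpos : 0 < K := by omega
  have hS : ∀ i : Fin N, 0 < ∑ j, P i j * Real.exp (β j) := by
    intro i
    apply Finset.sum_pos
    · intro j _
      exact mul_pos (hP i j) (Real.exp_pos _)
    · exact Finset.univ_nonempty_iff.mpr ⟨⟨0, hKpos⟩⟩
  have hA : ∀ k : Fin K, 0 < (1 / (Nk k : ℝ)) * ∑ i, P i k / ∑ j, P i j * Real.exp (β j) := by
    intro k
    apply mul_pos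
    · have := hNk k
      positivity
    · apply Finset.sum_pos
      · intro i _
        exact div_pos (hP i k) (hS i)
      · exact Finset.univ_nonempty_iff.mpr ⟨⟨0, hN⟩⟩
  have hrew : ∀ k : Fin K,
      (Nk k : ℝ) * Real.exp (-(sucpa P Nk β k - β k))
        = ∑ i, Real.exp (β k) * (P i k / ∑ j, P i j * Real.exp (β j)) := by
    intro k
    have hNkne : (Nk k : ℝ) ≠ 0 := Nat.cast_ne_zero.mpr (hNk k).ne'
    have : Real.exp (-(sucpa P Nk β k)) =
        (1 / (Nk k : ℝ)) * ∑ i, P i k / ∑ j, P i j * Real.exp (β j) := by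
      simp only [sucpa, neg_neg]
      exact Real.exp_log (hA k)
    rw [show -(sucpa P Nk β k - β k) = β k + -(sucpa P Nk β k) by ring,
      Real.exp_add, this]
    rw [show (Nk k : ℝ) * (Real.exp (β k) * ((1 / (Nk k : ℝ)) *
        ∑ i, P i k / ∑ j, P i j * Real.exp (β j)))
      = Real.exp (β k) * ∑ i, P i k / ∑ j, P i j * Real.exp (β j) by
        field_simp]
    rw [Finset.mul_sum]
  rw [Finset.sum_congr rfl fun k _ => hrew k, Finset.sum_comm]
  have : ∀ i : Fin N, (∑ k, Real.exp (β k) * (P i k / ∑ j, P i j * Real.exp (β j))) = 1 := by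
    intro i
    have hSne := (hS i).ne'
    rw [Finset.sum_congr rfl fun k _ => by
      rw [show Real.exp (β k) * (P i k / ∑ j, P i j * Real.exp (β j))
        = P i k * Real.exp (β k) / ∑ j, P i j * Real.exp (β j) by ring]]
    rw [← Finset.sum_div, div_eq_one_iff_eq hSne]
  rw [Finset.sum_congr rfl fun i _ => this i]
  simp
end

section
/- The set of fixed points of the two-dimensional SUCPA map is exactly the line S_b = {(λ, λ + b) : λ ∈ R}, where b is the unique real number with α_1(b) = 1. -/
open Real Finset Filter

/-- Auxiliary function `α₁(x) = (1/N₁) Σ_i p_i / (p_i + q_i e^x)`. -/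
noncomputable def alpha1 {N : ℕ} (N1 : ℕ) (p q : Fin N → ℝ) (x : ℝ) : ℝ :=
  (1 / (N1 : ℝ)) * ∑ i, p i / (p i + q i * Real.exp x)

/-- Auxiliary function `α₂(x) = (1/N₂) Σ_i q_i / (p_i + q_i e^x)`. -/
noncomputable def alpha2 {N : ℕ} (N2 : ℕ) (p q : Fin N → ℝ) (x : ℝ) : ℝ :=
  (1 / (N2 : ℝ)) * ∑ i, q i / (p i + q i * Real.exp x)

/-- The two-dimensional SUCPA map. -/
noncomputable def sucpa2 {N : ℕ} (N1 N2 : ℕ) (p q : Fin N → ℝ)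
    (β : Fin 2 → ℝ) : Fin 2 → ℝ :=
  ![-Real.log ((1 / (N1 : ℝ)) *
      ∑ i, p i / (p i * Real.exp (β 0) + q i * Real.exp (β 1))),
    -Real.log ((1 / (N2 : ℝ)) *
      ∑ i, q i / (p i * Real.exp (β 0) + q i * Real.exp (β 1)))]

lemma alpha1_strictAnti {N : ℕ} (N1 : ℕ) (hN1 : 0 < N1) (hNpos : 0 < N)
    (p q : Fin N → ℝ) (hp : ∀ i, 0 < p i) (hq : ∀ i, 0 < q i) :
    StrictAnti (alpha1 N1 p q) := by
  intro x y hxy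
  unfold alpha1
  have hN1R : (0:ℝ) < (N1:ℝ) := by exact_mod_cast hN1
  have h1 : (0:ℝ) < 1 / (N1:ℝ) := by positivity
  apply mul_lt_mul_of_pos_left _ h1
  apply Finset.sum_lt_sum_of_nonempty
  · simpa [Finset.univ_nonempty_iff] using Fin.pos_iff_nonempty.mp hNpos
  · intro i _
    have hqi := hq i
    have hpi := hp i
    apply div_lt_div_of_pos_left (hp i) (by positivity)
    have := Real.exp_lt_exp.mpr hxy
    nlinarith [hq i]

lemma term_p (pi qi a c : ℝ) (hpi : 0 < pi) (hqi : 0 < qi) :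
    pi / (pi * Real.exp a + qi * Real.exp c) =
      Real.exp (-a) * (pi / (pi + qi * Real.exp (c - a))) := by
  have hD : (0:ℝ) < pi + qi * Real.exp (c - a) := by positivity
  have key : pi * Real.exp a + qi * Real.exp c =
      Real.exp a * (pi + qi * Real.exp (c - a)) := by
    rw [mul_add, mul_comm (Real.exp a) (qi * Real.exp (c-a)), mul_assoc,
      ← Real.exp_add]
    ring_nf
  rw [key, Real.exp_neg]
  field_simp

lemma term_q (pi qi a c : ℝ) (hpi : 0 < pi) (hqi : 0 < qi) :
    qi / (pi * Real.exp a + qi * Real.exp c) =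
      Real.exp (-c) * (qi * Real.exp (c - a) / (pi + qi * Real.exp (c - a))) := by
  have hD : (0:ℝ) < pi + qi * Real.exp (c - a) := by positivity
  have key : pi * Real.exp a + qi * Real.exp c =
      Real.exp a * (pi + qi * Real.exp (c - a)) := by
    rw [mul_add, mul_comm (Real.exp a) (qi * Real.exp (c-a)), mul_assoc,
      ← Real.exp_add]
    ring_nf
  rw [key, Real.exp_sub, Real.exp_neg]
  field_simp

lemma sum_q_eq {N : ℕ} (N1 N2 : ℕ) (hN : N1 + N2 = N)
    (p q : Fin N → ℝ) (hp : ∀ i, 0 < p i) (hq : ∀ i, 0 < q i) (x : ℝ)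
    (hx : ∑ i, p i / (p i + q i * Real.exp x) = N1) :
    ∑ i, q i * Real.exp x / (p i + q i * Real.exp x) = N2 := by
  have htot : ∑ i, (p i / (p i + q i * Real.exp x)
      + q i * Real.exp x / (p i + q i * Real.exp x)) = (N:ℝ) := by
    have : ∀ i, p i / (p i + q i * Real.exp x)
        + q i * Real.exp x / (p i + q i * Real.exp x) = 1 := by
      intro i
      have hpi := hp i
      have hqi := hq i
      have hD : (0:ℝ) < p i + q i * Real.exp x := by positivity
      field_simp
    simp [this]
  rw [Finset.sum_add_distrib, hx] at htot
  have : ((N1:ℝ) + (N2:ℝ)) = (N:ℝ) := by exact_mod_cast congrArg Nat.cast hN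
  linarith

theorem fixed_points_eq_line {N : ℕ} (N1 N2 : ℕ) (hN1 : 0 < N1) (hN2 : 0 < N2)
    (hN : N1 + N2 = N) (p q : Fin N → ℝ) (hp : ∀ i, 0 < p i) (hq : ∀ i, 0 < q i)
    (hpq : ∀ i, p i + q i = 1) (b : ℝ) (hb : alpha1 N1 p q b = 1) :
    {β : Fin 2 → ℝ | sucpa2 N1 N2 p q β = β} =
      {β : Fin 2 → ℝ | ∃ lam : ℝ, β = ![lam, lam + b]} := by
  have hNpos : 0 < N := by omega
  have hanti := alpha1_strictAnti N1 hN1 hNpos p q hp hq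
  have hsb : ∑ i, p i / (p i + q i * Real.exp b) = (N1:ℝ) := by
    unfold alpha1 at hb
    have hN1' : (N1:ℝ) ≠ 0 := by exact_mod_cast hN1.ne'
    field_simp at hb
    linarith
  ext β
  simp only [Set.mem_setOf_eq]
  constructor
  · intro h
    have h0 := congrFun h 0
    simp only [sucpa2, Matrix.cons_val_zero] at h0
    set x := β 1 - β 0 with hxdef
    have hsum : ∑ i, p i / (p i * Real.exp (β 0) + q i * Real.exp (β 1)) =
        Real.exp (-(β 0)) * ∑ i, p i / (p i + q i * Real.exp x) := by
      rw [Finset.mul_sum]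
      exact Finset.sum_congr rfl fun i _ => term_p _ _ _ _ (hp i) (hq i)
    have hS1pos : (0:ℝ) < (1 / (N1:ℝ)) *
        ∑ i, p i / (p i * Real.exp (β 0) + q i * Real.exp (β 1)) := by
      apply mul_pos (by positivity)
      apply Finset.sum_pos _ (by simpa [Finset.univ_nonempty_iff] using Fin.pos_iff_nonempty.mp hNpos)
      intro i _
      have := hp i; have := hq i
      positivity
    have hlog : Real.log ((1 / (N1:ℝ)) *
        ∑ i, p i / (p i * Real.exp (β 0) + q i * Real.exp (β 1))) = -(β 0) := by
      linarith
    have hexp : (1 / (N1:ℝ)) *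
        ∑ i, p i / (p i * Real.exp (β 0) + q i * Real.exp (β 1)) =
        Real.exp (-(β 0)) := by
      rw [← hlog, Real.exp_log hS1pos]
    rw [hsum] at hexp
    have hepos : Real.exp (-(β 0)) ≠ 0 := Real.exp_ne_zero _
    have halpha : alpha1 N1 p q x = 1 := by
      unfold alpha1
      apply mul_left_cancel₀ hepos
      rw [mul_one]
      linear_combination hexp
    have hxb : x = b := hanti.injective (halpha.trans hb.symm)
    have h1b : β 1 = β 0 + b := by rw [← hxb, hxdef]; ring
    refine ⟨β 0, ?_⟩
    funext j
    fin_cases j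
    · simp
    · simpa using h1b
  · rintro ⟨lam, rfl⟩
    have hc : (lam + b) - lam = b := by ring
    have hsum1 : ∑ i, p i / (p i * Real.exp lam + q i * Real.exp (lam + b)) =
        Real.exp (-lam) * (N1:ℝ) := by
      rw [← hsb, Finset.mul_sum]
      refine Finset.sum_congr rfl fun i _ => ?_
      rw [term_p _ _ _ _ (hp i) (hq i), hc]
    have hsq : ∑ i, q i * Real.exp b / (p i + q i * Real.exp b) = (N2:ℝ) :=
      sum_q_eq N1 N2 hN p q hp hq b hsb
    have hsum2 : ∑ i, q i / (p i * Real.exp lam + q i * Real.exp (lam + b)) =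
        Real.exp (-(lam + b)) * (N2:ℝ) := by
      rw [← hsq, Finset.mul_sum]
      refine Finset.sum_congr rfl fun i _ => ?_
      rw [term_q _ _ _ _ (hp i) (hq i), hc]
    have hN1' : (N1:ℝ) ≠ 0 := by exact_mod_cast hN1.ne'
    have hN2' : (N2:ℝ) ≠ 0 := by exact_mod_cast hN2.ne'
    funext j
    fin_cases j
    · show -Real.log ((1 / (N1:ℝ)) *
          ∑ i, p i / (p i * Real.exp lam + q i * Real.exp (lam + b))) = lam
      rw [hsum1]
      rw [show (1 / (N1:ℝ)) * (Real.exp (-lam) * (N1:ℝ)) = Real.exp (-lam) by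
        field_simp]
      rw [Real.log_exp]; ring
    · show -Real.log ((1 / (N2:ℝ)) *
          ∑ i, q i / (p i * Real.exp lam + q i * Real.exp (lam + b))) = lam + b
      rw [hsum2]
      rw [show (1 / (N2:ℝ)) * (Real.exp (-(lam + b)) * (N2:ℝ)) =
        Real.exp (-(lam + b)) by field_simp]
      rw [Real.log_exp]; ring
end

section
/- The function g(x) = α_2(x)/α_1(x) is monotone non-increasing on R. -/
open Real Finset Filter

lemma key_pair (a b pi qi pj qj : ℝ) (ha : 0 < a) (hab : a ≤ b)
    (hpi : 0 < pi) (hqi : 0 < qi) (hpj : 0 < pj) (hqj : 0 < qj) :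
    qi * pj / ((pi + qi * b) * (pj + qj * a)) + qj * pi / ((pj + qj * b) * (pi + qi * a)) ≤
    qi * pj / ((pi + qi * a) * (pj + qj * b)) + qj * pi / ((pj + qj * a) * (pi + qi * b)) := by
  have hb : 0 < b := lt_of_lt_of_le ha hab
  have hA : 0 < pi + qi * a := by positivity
  have hB : 0 < pi + qi * b := by positivity
  have hC : 0 < pj + qj * a := by positivity
  have hD : 0 < pj + qj * b := by positivity
  rw [div_add_div _ _ (by positivity) (by positivity),
      div_add_div _ _ (by positivity) (by positivity),
      div_le_div_iff₀ (by positivity) (by positivity)]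
  nlinarith [mul_nonneg (sub_nonneg.2 hab) (sq_nonneg (pi * qj - pj * qi)),
    mul_pos hA hB, mul_pos hC hD, mul_pos (mul_pos hA hB) (mul_pos hC hD),
    mul_pos hA hC, mul_pos hB hD, sq_nonneg (pi * qj - pj * qi)]

lemma sum_cross {N : ℕ} (p q : Fin N → ℝ) (hp : ∀ i, 0 < p i) (hq : ∀ i, 0 < q i)
    {x y : ℝ} (hxy : x ≤ y) :
    (∑ i, q i / (p i + q i * Real.exp y)) * (∑ i, p i / (p i + q i * Real.exp x)) ≤
    (∑ i, q i / (p i + q i * Real.exp x)) * (∑ i, p i / (p i + q i * Real.exp y)) := by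
  have hab : Real.exp x ≤ Real.exp y := Real.exp_le_exp.2 hxy
  set a := Real.exp x with hadef
  set b := Real.exp y with hbdef
  have ha : 0 < a := Real.exp_pos x
  -- expand products as double sums
  rw [Finset.sum_mul_sum, Finset.sum_mul_sum]
  set T : Fin N → Fin N → ℝ := fun i j => q i / (p i + q i * b) * (p j / (p j + q j * a)) with hT
  set U : Fin N → Fin N → ℝ := fun i j => q i / (p i + q i * a) * (p j / (p j + q j * b)) with hU
  have hsymT : (∑ i, ∑ j, T i j) = ∑ i, ∑ j, T j i := Finset.sum_comm
  have hsymU : (∑ i, ∑ j, U i j) = ∑ i, ∑ j, U j i := Finset.sum_comm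
  have hmain : (∑ i, ∑ j, (T i j + T j i)) ≤ ∑ i, ∑ j, (U i j + U j i) := by
    refine Finset.sum_le_sum fun i _ => Finset.sum_le_sum fun j _ => ?_
    have := key_pair a b (p i) (q i) (p j) (q j) ha hab (hp i) (hq i) (hp j) (hq j)
    have e1 : T i j = q i * p j / ((p i + q i * b) * (p j + q j * a)) := by
      simp only [hT]; rw [div_mul_div_comm]
    have e2 : T j i = q j * p i / ((p j + q j * b) * (p i + q i * a)) := by
      simp only [hT]; rw [div_mul_div_comm]
    have e3 : U i j = q i * p j / ((p i + q i * a) * (p j + q j * b)) := by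
      simp only [hU]; rw [div_mul_div_comm]
    have e4 : U j i = q j * p i / ((p j + q j * a) * (p i + q i * b)) := by
      simp only [hU]; rw [div_mul_div_comm]
    rw [e1, e2, e3, e4]; exact this
  simp only [Finset.sum_add_distrib] at hmain
  linarith [hmain, hsymT, hsymU]

theorem ratio_antitone {N : ℕ} (N1 N2 : ℕ) (hN1 : 0 < N1) (hN2 : 0 < N2)
    (p q : Fin N → ℝ) (hp : ∀ i, 0 < p i) (hq : ∀ i, 0 < q i)
    (hpq : ∀ i, p i + q i = 1) :
    Antitone (fun x => alpha2 N2 p q x / alpha1 N1 p q x) := by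
  intro x y hxy
  simp only
  rcases Nat.eq_zero_or_pos N with hN | hN
  · subst hN
    simp [alpha1, alpha2]
  · have hNe : Nonempty (Fin N) := ⟨⟨0, hN⟩⟩
    have hS1 : ∀ z : ℝ, 0 < ∑ i, p i / (p i + q i * Real.exp z) := fun z =>
      Finset.sum_pos (fun i _ => div_pos (hp i)
        (add_pos (hp i) (mul_pos (hq i) (Real.exp_pos z)))) Finset.univ_nonempty
    have hS2 : ∀ z : ℝ, 0 < ∑ i, q i / (p i + q i * Real.exp z) := fun z =>
      Finset.sum_pos (fun i _ => div_pos (hq i)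
        (add_pos (hp i) (mul_pos (hq i) (Real.exp_pos z)))) Finset.univ_nonempty
    have hA1 : ∀ z : ℝ, 0 < alpha1 N1 p q z := fun z => by
      have h1 : (0:ℝ) < N1 := by exact_mod_cast hN1
      unfold alpha1
      exact mul_pos (by positivity) (hS1 z)
    rw [div_le_div_iff₀ (hA1 y) (hA1 x)]
    unfold alpha1 alpha2
    have hN1' : (0:ℝ) < N1 := by exact_mod_cast hN1
    have hN2' : (0:ℝ) < N2 := by exact_mod_cast hN2
    have h := sum_cross p q hp hq hxy
    have hc : (0:ℝ) < (1 / (N2:ℝ)) * (1 / (N1:ℝ)) := by positivity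
    calc (1 / (N2:ℝ)) * (∑ i, q i / (p i + q i * Real.exp y)) *
          ((1 / (N1:ℝ)) * ∑ i, p i / (p i + q i * Real.exp x))
        = (1 / (N2:ℝ)) * (1 / (N1:ℝ)) *
            ((∑ i, q i / (p i + q i * Real.exp y)) * ∑ i, p i / (p i + q i * Real.exp x)) := by
          ring
      _ ≤ (1 / (N2:ℝ)) * (1 / (N1:ℝ)) *
            ((∑ i, q i / (p i + q i * Real.exp x)) * ∑ i, p i / (p i + q i * Real.exp y)) := by
          exact mul_le_mul_of_nonneg_left h hc.le
      _ = (1 / (N2:ℝ)) * (∑ i, q i / (p i + q i * Real.exp x)) *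
            ((1 / (N1:ℝ)) * ∑ i, p i / (p i + q i * Real.exp y)) := by ring
end

section
/- Let φ(x) = log(α_1(x)/α_2(x)) be the intercept-update function and b the unique real with α_1(b) = 1. Then for x > b one has b ≤ φ(x) < x, and for x < b one has x < φ(x) ≤ b. -/
open Real Finset Filter

/-- The intercept-update function `φ(x) = log(α₁(x)/α₂(x))`. -/
noncomputable def phi {N : ℕ} (N1 N2 : ℕ) (p q : Fin N → ℝ) (x : ℝ) : ℝ :=
  Real.log (alpha1 N1 p q x / alpha2 N2 p q x)

/-- Per-index algebraic identity used in the proof. -/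
lemma per_index (n1 n2 t s pi qi : ℝ) (hd1 : pi + qi * t ≠ 0) (hd2 : pi + qi * s ≠ 0) :
    ((n2 * pi - n1 * t * qi) / (pi + qi * s)) * (n1 * t + n2 * s) =
      (n1 + n2) * t * ((n2 * pi - n1 * t * qi) / (pi + qi * t)) +
        (s - t) * ((n2 * pi - n1 * t * qi) ^ 2 / ((pi + qi * t) * (pi + qi * s))) := by
  simp only [div_mul_eq_mul_div, mul_div_assoc']
  rw [div_add_div _ _ hd1 (mul_ne_zero hd1 hd2), div_eq_div_iff hd2 (mul_ne_zero hd1 (mul_ne_zero hd1 hd2))]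
  ring

theorem phi_between {N : ℕ} (N1 N2 : ℕ) (hN1 : 0 < N1) (hN2 : 0 < N2)
    (hN : N1 + N2 = N) (p q : Fin N → ℝ) (hp : ∀ i, 0 < p i) (hq : ∀ i, 0 < q i)
    (hpq : ∀ i, p i + q i = 1) (b : ℝ) (hb : alpha1 N1 p q b = 1) :
    (∀ x, b < x → b ≤ phi N1 N2 p q x ∧ phi N1 N2 p q x < x) ∧
    (∀ x, x < b → x < phi N1 N2 p q x ∧ phi N1 N2 p q x ≤ b) := by
  have hNpos : 0 < N := by omega
  have hne : (Finset.univ : Finset (Fin N)).Nonempty := ⟨⟨0, hNpos⟩, Finset.mem_univ _⟩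
  have hN1R : (0:ℝ) < N1 := by exact_mod_cast hN1
  have hN2R : (0:ℝ) < N2 := by exact_mod_cast hN2
  have hNR : (N:ℝ) = N1 + N2 := by exact_mod_cast hN.symm
  have hd : ∀ (u : ℝ), 0 < u → ∀ i, 0 < p i + q i * u := fun u hu i =>
    add_pos (hp i) (mul_pos (hq i) hu)
  set t := Real.exp b with ht
  have htpos : 0 < t := Real.exp_pos b
  -- sums of p/(p+q*u) and q/(p+q*u)
  have hAB : ∀ (u : ℝ), 0 < u →
      (∑ i, p i / (p i + q i * u)) + u * (∑ i, q i / (p i + q i * u)) = N := by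
    intro u hu
    rw [Finset.mul_sum, ← Finset.sum_add_distrib]
    have : ∀ i ∈ Finset.univ, p i / (p i + q i * u) + u * (q i / (p i + q i * u)) = 1 := by
      intro i _
      have := (hd u hu i).ne'
      field_simp
    rw [Finset.sum_congr rfl this]
    simp
  -- value at b
  have hA_b : ∑ i, p i / (p i + q i * t) = N1 := by
    have h := hb
    rw [alpha1] at h
    rw [one_div, mul_comm] at h
    field_simp at h
    exact h
  have hB_b : t * (∑ i, q i / (p i + q i * t)) = N2 := by
    have h := hAB t htpos
    rw [hA_b] at h
    rw [hNR] at h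
    linarith
  -- strict antitonicity of A
  have hAmono : ∀ u v : ℝ, 0 < u → u < v →
      (∑ i, p i / (p i + q i * v)) < ∑ i, p i / (p i + q i * u) := by
    intro u v hu huv
    apply Finset.sum_lt_sum_of_nonempty hne
    intro i _
    apply div_lt_div_of_pos_left (hp i) (hd u hu i)
    have : q i * u < q i * v := by
      exact mul_lt_mul_of_pos_left huv (hq i)
    linarith
  -- F(t) = 0
  have hF0 : ∑ i, (N2 * p i - N1 * t * q i) / (p i + q i * t) = 0 := by
    have hsplit : ∀ i ∈ Finset.univ,
        ((N2:ℝ) * p i - N1 * t * q i) / (p i + q i * t) =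
          (N2:ℝ) * (p i / (p i + q i * t)) - (N1 * t) * (q i / (p i + q i * t)) := by
      intro i _
      rw [sub_div, mul_div_assoc, mul_div_assoc]
    rw [Finset.sum_congr rfl hsplit, Finset.sum_sub_distrib, ← Finset.mul_sum, ← Finset.mul_sum,
      hA_b]
    have : (N1:ℝ) * t * ∑ i, q i / (p i + q i * t) = N1 * (t * ∑ i, q i / (p i + q i * t)) := by
      ring
    rw [this, hB_b]
    ring
  -- key summed identity
  have hkey : ∀ s : ℝ, 0 < s →
      (∑ i, ((N2:ℝ) * p i - N1 * t * q i) / (p i + q i * s)) * ((N1:ℝ) * t + N2 * s) =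
        (s - t) * ∑ i, ((N2:ℝ) * p i - N1 * t * q i) ^ 2 /
          ((p i + q i * t) * (p i + q i * s)) := by
    intro s hs
    rw [Finset.sum_mul]
    have : ∀ i ∈ Finset.univ,
        (((N2:ℝ) * p i - N1 * t * q i) / (p i + q i * s)) * ((N1:ℝ) * t + N2 * s) =
          ((N1:ℝ) + N2) * t * (((N2:ℝ) * p i - N1 * t * q i) / (p i + q i * t)) +
            (s - t) * (((N2:ℝ) * p i - N1 * t * q i) ^ 2 /
              ((p i + q i * t) * (p i + q i * s))) := by
      intro i _
      exact per_index _ _ _ _ _ _ (hd t htpos i).ne' (hd s hs i).ne'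
    rw [Finset.sum_congr rfl this, Finset.sum_add_distrib, ← Finset.mul_sum, ← Finset.mul_sum,
      hF0]
    ring
  -- F(s) relation to A, B
  have hFAB : ∀ s : ℝ, 0 < s →
      ∑ i, ((N2:ℝ) * p i - N1 * t * q i) / (p i + q i * s) =
        (N2:ℝ) * (∑ i, p i / (p i + q i * s)) - N1 * t * (∑ i, q i / (p i + q i * s)) := by
    intro s hs
    rw [Finset.mul_sum, Finset.mul_sum, ← Finset.sum_sub_distrib]
    apply Finset.sum_congr rfl
    intro i _
    rw [sub_div, mul_div_assoc, mul_div_assoc]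
  -- positivity of sums
  have hApos : ∀ s : ℝ, 0 < s → 0 < ∑ i, p i / (p i + q i * s) := by
    intro s hs
    apply Finset.sum_pos (fun i _ => div_pos (hp i) (hd s hs i)) hne
  have hBpos : ∀ s : ℝ, 0 < s → 0 < ∑ i, q i / (p i + q i * s) := by
    intro s hs
    apply Finset.sum_pos (fun i _ => div_pos (hq i) (hd s hs i)) hne
  have hSnn : ∀ s : ℝ, 0 < s →
      0 ≤ ∑ i, ((N2:ℝ) * p i - N1 * t * q i) ^ 2 / ((p i + q i * t) * (p i + q i * s)) := by
    intro s hs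
    apply Finset.sum_nonneg
    intro i _
    exact div_nonneg (sq_nonneg _) (le_of_lt (mul_pos (hd t htpos i) (hd s hs i)))
  -- ratio formula
  have hratio : ∀ x : ℝ,
      alpha1 N1 p q x / alpha2 N2 p q x =
        ((N2:ℝ) * ∑ i, p i / (p i + q i * Real.exp x)) /
          ((N1:ℝ) * ∑ i, q i / (p i + q i * Real.exp x)) := by
    intro x
    rw [alpha1, alpha2]
    field_simp
    congr 1; apply Finset.sum_congr rfl; intro i _; ring
  constructor
  · -- x > b
    intro x hx
    set s := Real.exp x with hs
    have hspos : 0 < s := Real.exp_pos x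
    have hts : t < s := Real.exp_lt_exp.mpr hx
    set A := ∑ i, p i / (p i + q i * s) with hA
    set B := ∑ i, q i / (p i + q i * s) with hB
    have hApos' : 0 < A := hApos s hspos
    have hBpos' : 0 < B := hBpos s hspos
    have hAB' : A + s * B = N := hAB s hspos
    have hAlt : A < N1 := by
      have := hAmono t s htpos hts
      rw [hA_b] at this
      exact this
    have hFnn : 0 ≤ (N2:ℝ) * A - N1 * t * B := by
      have h1 := hkey s hspos
      have h2 := hFAB s hspos
      rw [h2] at h1
      have hdenpos : 0 < (N1:ℝ) * t + N2 * s := by positivity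
      have hrhs : 0 ≤ (s - t) * ∑ i, ((N2:ℝ) * p i - N1 * t * q i) ^ 2 /
          ((p i + q i * t) * (p i + q i * s)) :=
        mul_nonneg (by linarith) (hSnn s hspos)
      have hmul : 0 ≤ (∑ i, ((N2:ℝ) * p i - N1 * t * q i) / (p i + q i * s)) *
          ((N1:ℝ) * t + N2 * s) := by rw [hkey s hspos]; exact hrhs
      rw [h2] at hmul
      exact nonneg_of_mul_nonneg_left hmul hdenpos
    have hrpos : 0 < alpha1 N1 p q x / alpha2 N2 p q x := by
      rw [hratio x, ← hs, ← hA, ← hB]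
      positivity
    have hreq : alpha1 N1 p q x / alpha2 N2 p q x = ((N2:ℝ) * A) / ((N1:ℝ) * B) := by
      rw [hratio x, ← hs, ← hA, ← hB]
    constructor
    · rw [phi, Real.le_log_iff_exp_le hrpos, hreq, ← ht, le_div_iff₀ (by positivity)]
      have e1 : t * ((N1:ℝ) * B) = (N1:ℝ) * t * B := by ring
      linarith
    · rw [phi, Real.log_lt_iff_lt_exp hrpos, hreq, ← hs, div_lt_iff₀ (by positivity)]
      have e1 : s * ((N1:ℝ) * B) = (N1:ℝ) * (s * B) := by ring
      have f1 : (N2:ℝ) * A < N2 * N1 := by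
        exact mul_lt_mul_of_pos_left hAlt hN2R
      have f2 : (N2:ℝ) < s * B := by linarith
      have f3 : (N1:ℝ) * N2 < N1 * (s * B) := mul_lt_mul_of_pos_left f2 hN1R
      linarith
  · -- x < b
    intro x hx
    set s := Real.exp x with hs
    have hspos : 0 < s := Real.exp_pos x
    have hts : s < t := Real.exp_lt_exp.mpr hx
    set A := ∑ i, p i / (p i + q i * s) with hA
    set B := ∑ i, q i / (p i + q i * s) with hB
    have hApos' : 0 < A := hApos s hspos
    have hBpos' : 0 < B := hBpos s hspos
    have hAB' : A + s * B = N := hAB s hspos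
    have hAgt : (N1:ℝ) < A := by
      have := hAmono s t hspos hts
      rw [hA_b] at this
      exact this
    have hFnp : (N2:ℝ) * A - N1 * t * B ≤ 0 := by
      have h1 := hkey s hspos
      have h2 := hFAB s hspos
      rw [h2] at h1
      have hdenpos : 0 < (N1:ℝ) * t + N2 * s := by positivity
      have hrhs : (s - t) * ∑ i, ((N2:ℝ) * p i - N1 * t * q i) ^ 2 /
          ((p i + q i * t) * (p i + q i * s)) ≤ 0 :=
        mul_nonpos_of_nonpos_of_nonneg (by linarith) (hSnn s hspos)
      have hmul : (∑ i, ((N2:ℝ) * p i - N1 * t * q i) / (p i + q i * s)) *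
          ((N1:ℝ) * t + N2 * s) ≤ 0 := by rw [hkey s hspos]; exact hrhs
      rw [h2] at hmul
      exact nonpos_of_mul_nonpos_left hmul hdenpos
    have hrpos : 0 < alpha1 N1 p q x / alpha2 N2 p q x := by
      rw [hratio x, ← hs, ← hA, ← hB]
      positivity
    have hreq : alpha1 N1 p q x / alpha2 N2 p q x = ((N2:ℝ) * A) / ((N1:ℝ) * B) := by
      rw [hratio x, ← hs, ← hA, ← hB]
    constructor
    · rw [phi, Real.lt_log_iff_exp_lt hrpos, hreq, ← hs, lt_div_iff₀ (by positivity)]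
      have e1 : s * ((N1:ℝ) * B) = (N1:ℝ) * (s * B) := by ring
      have f1 : (N2:ℝ) * N1 < N2 * A := mul_lt_mul_of_pos_left hAgt hN2R
      have f2 : s * B < (N2:ℝ) := by linarith
      have f3 : (N1:ℝ) * (s * B) < N1 * N2 := mul_lt_mul_of_pos_left f2 hN1R
      linarith
    · rw [phi, Real.log_le_iff_le_exp hrpos, hreq, ← ht, div_le_iff₀ (by positivity)]
      have e1 : t * ((N1:ℝ) * B) = (N1:ℝ) * t * B := by ring
      linarith
end

section
/- The two-dimensional SUCPA map maps the line S_x = {(λ, λ+x) : λ ∈ R} onto the line S_{φ(x)}, i.e., the difference of the two components transforms as f_2(β) - f_1(β) = φ(β_2 - β_1), where φ(x) = log(α_1(x)/α_2(x)). -/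
open Real Finset Filter

theorem sucpa2_maps_lines {N : ℕ} (N1 N2 : ℕ) (hN1 : 0 < N1) (hN2 : 0 < N2)
    (hN : N1 + N2 = N) (p q : Fin N → ℝ) (hp : ∀ i, 0 < p i) (hq : ∀ i, 0 < q i)
    (hpq : ∀ i, p i + q i = 1) (β : Fin 2 → ℝ) :
    sucpa2 N1 N2 p q β 1 - sucpa2 N1 N2 p q β 0 = phi N1 N2 p q (β 1 - β 0) := by
  have hNpos : 0 < N := by omega
  haveI : Nonempty (Fin N) := Fin.pos_iff_nonempty.mp hNpos
  set x := β 1 - β 0 with hx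
  have hden : ∀ i, 0 < p i + q i * Real.exp x := fun i =>
    add_pos (hp i) (mul_pos (hq i) (Real.exp_pos _))
  have hα1 : 0 < alpha1 N1 p q x := by
    apply mul_pos (by positivity)
    exact Finset.sum_pos (fun i _ => div_pos (hp i) (hden i)) univ_nonempty
  have hα2 : 0 < alpha2 N2 p q x := by
    apply mul_pos (by positivity)
    exact Finset.sum_pos (fun i _ => div_pos (hq i) (hden i)) univ_nonempty
  have key : ∀ i, p i * Real.exp (β 0) + q i * Real.exp (β 1)
      = Real.exp (β 0) * (p i + q i * Real.exp x) := by
    intro i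
    rw [hx, Real.exp_sub]
    field_simp
  have hS1 : (1 / (N1 : ℝ)) * ∑ i, p i / (p i * Real.exp (β 0) + q i * Real.exp (β 1))
      = Real.exp (-(β 0)) * alpha1 N1 p q x := by
    unfold alpha1
    rw [Finset.mul_sum, mul_comm (Real.exp (-(β 0))), Finset.mul_sum, Finset.sum_mul]
    refine Finset.sum_congr rfl fun i _ => ?_
    rw [key i, Real.exp_neg]
    have := (Real.exp_pos (β 0)).ne'
    have := (hden i).ne'
    field_simp
  have hS2 : (1 / (N2 : ℝ)) * ∑ i, q i / (p i * Real.exp (β 0) + q i * Real.exp (β 1))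
      = Real.exp (-(β 0)) * alpha2 N2 p q x := by
    unfold alpha2
    rw [Finset.mul_sum, mul_comm (Real.exp (-(β 0))), Finset.mul_sum, Finset.sum_mul]
    refine Finset.sum_congr rfl fun i _ => ?_
    rw [key i, Real.exp_neg]
    have := (Real.exp_pos (β 0)).ne'
    have := (hden i).ne'
    field_simp
  show -Real.log _ - -Real.log _ = _
  rw [hS1, hS2, Real.log_mul (ne_of_gt (Real.exp_pos _)) (ne_of_gt hα2),
    Real.log_mul (ne_of_gt (Real.exp_pos _)) (ne_of_gt hα1), Real.log_exp,
    phi, Real.log_div (ne_of_gt hα1) (ne_of_gt hα2)]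
  ring
end

section
/- At any fixed point β* = (λ, λ+b) of the two-dimensional SUCPA map, the Jacobian matrix equals [[1+α_1'(b), -α_1'(b)], [1+e^b α_2'(b), -e^b α_2'(b)]] and is independent of λ. -/
open Real Finset Filter

/-- The Jacobian matrix at a fixed point, expressed via the derivatives of `α₁, α₂` at `b`:
`[[1+α₁'(b), -α₁'(b)], [1+e^b α₂'(b), -e^b α₂'(b)]]`. It does not depend on `λ`. -/
noncomputable def Jb {N : ℕ} (N1 N2 : ℕ) (p q : Fin N → ℝ) (b : ℝ) :
    Matrix (Fin 2) (Fin 2) ℝ :=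
  !![1 + deriv (alpha1 N1 p q) b, -(deriv (alpha1 N1 p q) b);
     1 + Real.exp b * deriv (alpha2 N2 p q) b, -(Real.exp b * deriv (alpha2 N2 p q) b)]

set_option maxHeartbeats 1000000 in
theorem sucpa2_jacobian_at_fixed_point {N : ℕ} (N1 N2 : ℕ) (hN1 : 0 < N1) (hN2 : 0 < N2)
    (hN : N1 + N2 = N) (p q : Fin N → ℝ) (hp : ∀ i, 0 < p i) (hq : ∀ i, 0 < q i)
    (hpq : ∀ i, p i + q i = 1) (b : ℝ) (hb : alpha1 N1 p q b = 1) (lam : ℝ) :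
    HasFDerivAt (sucpa2 N1 N2 p q)
      (LinearMap.toContinuousLinearMap (Matrix.toLin' (Jb N1 N2 p q b)))
      ![lam, lam + b] := by
  have hs : (0:ℝ) < Real.exp b := Real.exp_pos b
  have hE : (0:ℝ) < Real.exp lam := Real.exp_pos lam
  have hd : ∀ j, 0 < p j + q j * Real.exp b := fun j => add_pos (hp j) (mul_pos (hq j) hs)
  have hN1' : ((N1:ℝ)) ≠ 0 := Nat.cast_ne_zero.mpr hN1.ne'
  have hN2' : ((N2:ℝ)) ≠ 0 := Nat.cast_ne_zero.mpr hN2.ne'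
  -- key sum identities at the fixed point
  have hS1 : ∑ j, p j / (p j + q j * Real.exp b) = (N1:ℝ) := by
    have h := hb
    unfold alpha1 at h
    rw [one_div, inv_mul_eq_iff_eq_mul₀ hN1'] at h
    simpa using h
  have hS2 : ∑ j, q j * Real.exp b / (p j + q j * Real.exp b) = (N2:ℝ) := by
    have htot : ∑ j, (p j / (p j + q j * Real.exp b)
        + q j * Real.exp b / (p j + q j * Real.exp b)) = (N:ℝ) := by
      rw [Finset.sum_congr rfl fun j _ => by rw [← add_div, div_self (hd j).ne']]
      simp
    rw [Finset.sum_add_distrib, hS1] at htot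
    have hcast : ((N1:ℝ)) + (N2:ℝ) = (N:ℝ) := by exact_mod_cast congrArg (Nat.cast (R := ℝ)) hN
    linarith
  -- derivatives of alpha1 and alpha2 at b
  have hA1 : HasDerivAt (alpha1 N1 p q)
      ((1/(N1:ℝ)) * ∑ j, ((0 * (p j + q j * Real.exp b) - p j * (q j * Real.exp b))
        / (p j + q j * Real.exp b) ^ 2)) b := by
    unfold alpha1
    exact HasDerivAt.const_mul _ (HasDerivAt.fun_sum fun j _ =>
      (hasDerivAt_const b (p j)).div
        (((Real.hasDerivAt_exp b).const_mul (q j)).const_add (p j)) (hd j).ne')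
  have hA2 : HasDerivAt (alpha2 N2 p q)
      ((1/(N2:ℝ)) * ∑ j, ((0 * (p j + q j * Real.exp b) - q j * (q j * Real.exp b))
        / (p j + q j * Real.exp b) ^ 2)) b := by
    unfold alpha2
    exact HasDerivAt.const_mul _ (HasDerivAt.fun_sum fun j _ =>
      (hasDerivAt_const b (q j)).div
        (((Real.hasDerivAt_exp b).const_mul (q j)).const_add (p j)) (hd j).ne')
  set pt : Fin 2 → ℝ := ![lam, lam + b] with hptdef
  have hpt0 : pt 0 = lam := rfl
  have hpt1 : pt 1 = lam + b := rfl
  have h0 : HasFDerivAt (fun β : Fin 2 → ℝ => β 0)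
      (ContinuousLinearMap.proj (R := ℝ) (φ := fun _ : Fin 2 => ℝ) 0) pt := hasFDerivAt_apply 0 pt
  have h1 : HasFDerivAt (fun β : Fin 2 → ℝ => β 1)
      (ContinuousLinearMap.proj (R := ℝ) (φ := fun _ : Fin 2 => ℝ) 1) pt := hasFDerivAt_apply 1 pt
  have hexp0 : HasFDerivAt (fun β : Fin 2 → ℝ => Real.exp (β 0))
      (Real.exp lam • ContinuousLinearMap.proj (R := ℝ) (φ := fun _ : Fin 2 => ℝ) 0) pt :=
    HasDerivAt.comp_hasFDerivAt_of_eq pt (Real.hasDerivAt_exp lam) h0 hpt0.symm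
  have hexp1 : HasFDerivAt (fun β : Fin 2 → ℝ => Real.exp (β 1))
      (Real.exp (lam + b) • ContinuousLinearMap.proj (R := ℝ) (φ := fun _ : Fin 2 => ℝ) 1) pt :=
    HasDerivAt.comp_hasFDerivAt_of_eq pt (Real.hasDerivAt_exp (lam + b)) h1 hpt1.symm
  have hDpos : ∀ j, 0 < p j * Real.exp lam + q j * Real.exp (lam + b) :=
    fun j => add_pos (mul_pos (hp j) hE) (mul_pos (hq j) (Real.exp_pos _))
  have hD : ∀ j, HasFDerivAt (fun β : Fin 2 → ℝ => p j * Real.exp (β 0) + q j * Real.exp (β 1))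
      (p j • (Real.exp lam • ContinuousLinearMap.proj (R := ℝ) (φ := fun _ : Fin 2 => ℝ) 0)
        + q j • (Real.exp (lam + b) • ContinuousLinearMap.proj (R := ℝ) (φ := fun _ : Fin 2 => ℝ) 1)) pt :=
    fun j => (hexp0.const_mul (p j)).add (hexp1.const_mul (q j))
  have hterm : ∀ (j : Fin N) (a : ℝ), HasFDerivAt
      (fun β : Fin 2 → ℝ => a * (p j * Real.exp (β 0) + q j * Real.exp (β 1))⁻¹)
      ((a * -(((p j * Real.exp lam + q j * Real.exp (lam + b)) ^ 2)⁻¹)) •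
        (p j • (Real.exp lam • ContinuousLinearMap.proj (R := ℝ) (φ := fun _ : Fin 2 => ℝ) 0)
          + q j • (Real.exp (lam + b) • ContinuousLinearMap.proj (R := ℝ) (φ := fun _ : Fin 2 => ℝ) 1))) pt :=
    fun j a => by
      have h := HasDerivAt.comp_hasFDerivAt_of_eq pt
        ((hasDerivAt_inv (hDpos j).ne').const_mul a) (hD j) (by rw [hpt0, hpt1])
      exact h
  -- values at the fixed point
  have hval0 : (1/(N1:ℝ)) * ∑ j, p j * (p j * Real.exp lam + q j * Real.exp (lam + b))⁻¹
      = Real.exp (-lam) := by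
    have h : ∑ j, p j * (p j * Real.exp lam + q j * Real.exp (lam + b))⁻¹
        = Real.exp (-lam) * ∑ j, p j / (p j + q j * Real.exp b) := by
      rw [Finset.mul_sum]
      refine Finset.sum_congr rfl fun j _ => ?_
      rw [show p j * Real.exp lam + q j * Real.exp (lam + b)
          = Real.exp lam * (p j + q j * Real.exp b) by rw [Real.exp_add]; ring,
        mul_inv, Real.exp_neg, div_eq_mul_inv]
      ring
    rw [h, hS1]
    field_simp
  have hS2' : ∑ j, q j / (p j + q j * Real.exp b) = (N2:ℝ) * Real.exp (-b) := by
    rw [show (N2:ℝ) * Real.exp (-b)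
        = (∑ j, q j * Real.exp b / (p j + q j * Real.exp b)) * Real.exp (-b) by rw [hS2],
      Finset.sum_mul]
    refine Finset.sum_congr rfl fun j _ => ?_
    rw [Real.exp_neg, div_mul_eq_mul_div, mul_assoc, mul_inv_cancel₀ hs.ne', mul_one]
  have hval1 : (1/(N2:ℝ)) * ∑ j, q j * (p j * Real.exp lam + q j * Real.exp (lam + b))⁻¹
      = Real.exp (-(lam + b)) := by
    have h : ∑ j, q j * (p j * Real.exp lam + q j * Real.exp (lam + b))⁻¹
        = Real.exp (-lam) * ∑ j, q j / (p j + q j * Real.exp b) := by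
      rw [Finset.mul_sum]
      refine Finset.sum_congr rfl fun j _ => ?_
      rw [show p j * Real.exp lam + q j * Real.exp (lam + b)
          = Real.exp lam * (p j + q j * Real.exp b) by rw [Real.exp_add]; ring,
        mul_inv, Real.exp_neg, div_eq_mul_inv]
      ring
    rw [h, hS2', show -(lam + b) = -lam + -b by ring, Real.exp_add]
    field_simp
  -- component derivatives
  have hsum0 : HasFDerivAt
      (fun β : Fin 2 → ℝ => (1/(N1:ℝ)) * ∑ j, p j * (p j * Real.exp (β 0) + q j * Real.exp (β 1))⁻¹)
      ((1/(N1:ℝ)) • ∑ j, ((p j * -(((p j * Real.exp lam + q j * Real.exp (lam + b)) ^ 2)⁻¹)) •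
        (p j • (Real.exp lam • ContinuousLinearMap.proj (R := ℝ) (φ := fun _ : Fin 2 => ℝ) 0)
          + q j • (Real.exp (lam + b) • ContinuousLinearMap.proj (R := ℝ) (φ := fun _ : Fin 2 => ℝ) 1)))) pt :=
    HasFDerivAt.const_mul (HasFDerivAt.fun_sum fun j _ => hterm j (p j)) _
  have hsum1 : HasFDerivAt
      (fun β : Fin 2 → ℝ => (1/(N2:ℝ)) * ∑ j, q j * (p j * Real.exp (β 0) + q j * Real.exp (β 1))⁻¹)
      ((1/(N2:ℝ)) • ∑ j, ((q j * -(((p j * Real.exp lam + q j * Real.exp (lam + b)) ^ 2)⁻¹)) •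
        (p j • (Real.exp lam • ContinuousLinearMap.proj (R := ℝ) (φ := fun _ : Fin 2 => ℝ) 0)
          + q j • (Real.exp (lam + b) • ContinuousLinearMap.proj (R := ℝ) (φ := fun _ : Fin 2 => ℝ) 1)))) pt :=
    HasFDerivAt.const_mul (HasFDerivAt.fun_sum fun j _ => hterm j (q j)) _
  have hne0 : (1/(N1:ℝ)) * ∑ j, p j * (p j * Real.exp (pt 0) + q j * Real.exp (pt 1))⁻¹ ≠ 0 := by
    rw [hpt0, hpt1, hval0]; exact (Real.exp_pos _).ne'
  have hne1 : (1/(N2:ℝ)) * ∑ j, q j * (p j * Real.exp (pt 0) + q j * Real.exp (pt 1))⁻¹ ≠ 0 := by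
    rw [hpt0, hpt1, hval1]; exact (Real.exp_pos _).ne'
  have hf0 := (hsum0.log hne0).neg
  have hf1 := (hsum1.log hne1).neg
  have hfact : ∀ j, p j * Real.exp lam + q j * Real.exp (lam + b)
      = Real.exp lam * (p j + q j * Real.exp b) := fun j => by rw [Real.exp_add]; ring
  have hK1 : ∑ j, p j * p j / (p j + q j * Real.exp b) ^ 2
      = (N1:ℝ) + ∑ j, (-(p j * (q j * Real.exp b))) / (p j + q j * Real.exp b) ^ 2 := by
    rw [← hS1, ← Finset.sum_add_distrib]
    refine Finset.sum_congr rfl fun j _ => ?_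
    field_simp [(hd j).ne']
    ring
  have hK1' : ∑ j, (-(p j * (q j * Real.exp b))) / (p j + q j * Real.exp b) ^ 2
      = -∑ j, p j * (q j * Real.exp b) / (p j + q j * Real.exp b) ^ 2 := by
    rw [← Finset.sum_neg_distrib]
    exact Finset.sum_congr rfl fun j _ => by ring
  have hK2 : ∑ j, Real.exp b * (q j * p j) / (p j + q j * Real.exp b) ^ 2
      = (N2:ℝ) + Real.exp b * ∑ j, (-(q j * (q j * Real.exp b))) / (p j + q j * Real.exp b) ^ 2 := by
    rw [← hS2, Finset.mul_sum, ← Finset.sum_add_distrib]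
    refine Finset.sum_congr rfl fun j _ => ?_
    field_simp [(hd j).ne']
    ring
  have hK2' : Real.exp b * ∑ j, (-(q j * (q j * Real.exp b))) / (p j + q j * Real.exp b) ^ 2
      = -∑ j, Real.exp b * (q j * (q j * Real.exp b)) / (p j + q j * Real.exp b) ^ 2 := by
    rw [Finset.mul_sum, ← Finset.sum_neg_distrib]
    exact Finset.sum_congr rfl fun j _ => by ring
  have hL00 : ∑ j, p j * -((p j * Real.exp lam + q j * Real.exp (lam + b)) ^ 2)⁻¹ * (p j * Real.exp lam)
      = -(Real.exp lam)⁻¹ * ∑ j, p j * p j / (p j + q j * Real.exp b) ^ 2 := by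
    rw [Finset.mul_sum]
    refine Finset.sum_congr rfl fun j _ => ?_
    rw [hfact j]
    field_simp [(hd j).ne']
  have hL01 : ∑ j, p j * -((p j * Real.exp lam + q j * Real.exp (lam + b)) ^ 2)⁻¹ * (q j * Real.exp (lam + b))
      = -(Real.exp lam)⁻¹ * ∑ j, p j * (q j * Real.exp b) / (p j + q j * Real.exp b) ^ 2 := by
    rw [Finset.mul_sum]
    refine Finset.sum_congr rfl fun j _ => ?_
    rw [hfact j, Real.exp_add]
    field_simp [(hd j).ne']
  have hL10 : ∑ j, q j * -((p j * Real.exp lam + q j * Real.exp (lam + b)) ^ 2)⁻¹ * (p j * Real.exp lam)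
      = -(Real.exp (lam + b))⁻¹ * ∑ j, Real.exp b * (q j * p j) / (p j + q j * Real.exp b) ^ 2 := by
    rw [Finset.mul_sum]
    refine Finset.sum_congr rfl fun j _ => ?_
    rw [hfact j, Real.exp_add]
    field_simp [(hd j).ne']
  have hL11 : ∑ j, q j * -((p j * Real.exp lam + q j * Real.exp (lam + b)) ^ 2)⁻¹ * (q j * Real.exp (lam + b))
      = -(Real.exp (lam + b))⁻¹ * ∑ j, Real.exp b * (q j * (q j * Real.exp b)) / (p j + q j * Real.exp b) ^ 2 := by
    rw [Finset.mul_sum]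
    refine Finset.sum_congr rfl fun j _ => ?_
    rw [hfact j, Real.exp_add]
    field_simp [(hd j).ne']
  apply hasFDerivAt_pi''
  intro i
  fin_cases i
  · have hfun : (fun β : Fin 2 → ℝ => sucpa2 N1 N2 p q β 0)
        = (fun β : Fin 2 → ℝ => -Real.log ((1/(N1:ℝ)) *
            ∑ j, p j * (p j * Real.exp (β 0) + q j * Real.exp (β 1))⁻¹)) := by
      funext β; simp [sucpa2, div_eq_mul_inv]
    show HasFDerivAt (fun x => sucpa2 N1 N2 p q x 0)
      ((ContinuousLinearMap.proj (R := ℝ) (φ := fun _ : Fin 2 => ℝ) 0).comp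
        (LinearMap.toContinuousLinearMap (Matrix.toLin' (Jb N1 N2 p q b)))) pt
    rw [hfun]
    refine HasFDerivAt.congr_fderiv hf0 ?_
    apply ContinuousLinearMap.coe_injective
    apply Module.Basis.ext (Pi.basisFun ℝ (Fin 2))
    intro j
    fin_cases j
    · simp only [Pi.basisFun_apply, ContinuousLinearMap.coe_comp, ContinuousLinearMap.coe_coe,
        LinearMap.coe_comp, Function.comp_apply, LinearMap.coe_toContinuousLinearMap, LinearMap.coe_toContinuousLinearMap',
        Matrix.toLin'_apply, ContinuousLinearMap.coe_sum,
        ContinuousLinearMap.coe_smul, ContinuousLinearMap.coe_neg, ContinuousLinearMap.coe_add,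
        LinearMap.neg_apply, LinearMap.smul_apply, LinearMap.sum_apply, LinearMap.add_apply,
        LinearMap.proj_apply, smul_eq_mul, hpt0, hpt1, ContinuousLinearMap.proj_apply,
        Pi.single_apply, Jb, Matrix.mulVec, dotProduct, Fin.sum_univ_two,
        Matrix.cons_val', Matrix.cons_val_zero, Matrix.cons_val_one, Matrix.head_cons,
        Matrix.of_apply, Matrix.empty_val', Matrix.cons_val_fin_one, Matrix.head_fin_const,
        Real.exp_neg, inv_inv, mul_one, mul_zero, add_zero, zero_add, zero_mul,
        Fin.ext_iff, Fin.val_zero, Fin.val_one, Fin.isValue, reduceIte, Nat.one_ne_zero, one_ne_zero, zero_ne_one, ite_true, ite_false]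
      simp only [hval0, hA1.deriv, Real.exp_neg, inv_inv, zero_mul, zero_sub]
      rw [hL00, hK1]
      field_simp [Real.exp_ne_zero]
      congr 1; exact Finset.sum_congr rfl fun x _ => by ring
    · simp only [Pi.basisFun_apply, ContinuousLinearMap.coe_comp, ContinuousLinearMap.coe_coe,
        LinearMap.coe_comp, Function.comp_apply, LinearMap.coe_toContinuousLinearMap, LinearMap.coe_toContinuousLinearMap',
        Matrix.toLin'_apply, ContinuousLinearMap.coe_sum,
        ContinuousLinearMap.coe_smul, ContinuousLinearMap.coe_neg, ContinuousLinearMap.coe_add,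
        LinearMap.neg_apply, LinearMap.smul_apply, LinearMap.sum_apply, LinearMap.add_apply,
        LinearMap.proj_apply, smul_eq_mul, hpt0, hpt1, ContinuousLinearMap.proj_apply,
        Pi.single_apply, Jb, Matrix.mulVec, dotProduct, Fin.sum_univ_two,
        Matrix.cons_val', Matrix.cons_val_zero, Matrix.cons_val_one, Matrix.head_cons,
        Matrix.of_apply, Matrix.empty_val', Matrix.cons_val_fin_one, Matrix.head_fin_const,
        Real.exp_neg, inv_inv, mul_one, mul_zero, add_zero, zero_add, zero_mul,
        Fin.ext_iff, Fin.val_zero, Fin.val_one, Fin.isValue, reduceIte, Nat.one_ne_zero, one_ne_zero, zero_ne_one, ite_true, ite_false]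
      simp only [hval0, hA1.deriv, Real.exp_neg, inv_inv, zero_mul, zero_sub]
      rw [hL01, hK1']
      field_simp [Real.exp_ne_zero]
      exact Finset.sum_congr rfl fun x _ => by ring
  · have hfun : (fun β : Fin 2 → ℝ => sucpa2 N1 N2 p q β 1)
        = (fun β : Fin 2 → ℝ => -Real.log ((1/(N2:ℝ)) *
            ∑ j, q j * (p j * Real.exp (β 0) + q j * Real.exp (β 1))⁻¹)) := by
      funext β; simp [sucpa2, div_eq_mul_inv]
    show HasFDerivAt (fun x => sucpa2 N1 N2 p q x 1)
      ((ContinuousLinearMap.proj (R := ℝ) (φ := fun _ : Fin 2 => ℝ) 1).comp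
        (LinearMap.toContinuousLinearMap (Matrix.toLin' (Jb N1 N2 p q b)))) pt
    rw [hfun]
    refine HasFDerivAt.congr_fderiv hf1 ?_
    apply ContinuousLinearMap.coe_injective
    apply Module.Basis.ext (Pi.basisFun ℝ (Fin 2))
    intro j
    fin_cases j
    · simp only [Pi.basisFun_apply, ContinuousLinearMap.coe_comp, ContinuousLinearMap.coe_coe,
        LinearMap.coe_comp, Function.comp_apply, LinearMap.coe_toContinuousLinearMap, LinearMap.coe_toContinuousLinearMap',
        Matrix.toLin'_apply, ContinuousLinearMap.coe_sum,
        ContinuousLinearMap.coe_smul, ContinuousLinearMap.coe_neg, ContinuousLinearMap.coe_add,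
        LinearMap.neg_apply, LinearMap.smul_apply, LinearMap.sum_apply, LinearMap.add_apply,
        LinearMap.proj_apply, smul_eq_mul, hpt0, hpt1, ContinuousLinearMap.proj_apply,
        Pi.single_apply, Jb, Matrix.mulVec, dotProduct, Fin.sum_univ_two,
        Matrix.cons_val', Matrix.cons_val_zero, Matrix.cons_val_one, Matrix.head_cons,
        Matrix.of_apply, Matrix.empty_val', Matrix.cons_val_fin_one, Matrix.head_fin_const,
        Real.exp_neg, inv_inv, mul_one, mul_zero, add_zero, zero_add, zero_mul,
        Fin.ext_iff, Fin.val_zero, Fin.val_one, Fin.isValue, reduceIte, Nat.one_ne_zero, one_ne_zero, zero_ne_one, ite_true, ite_false]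
      simp only [hval1, hA2.deriv, Real.exp_neg, inv_inv, zero_mul, zero_sub]
      rw [hL10, hK2]
      field_simp [Real.exp_ne_zero]
    · simp only [Pi.basisFun_apply, ContinuousLinearMap.coe_comp, ContinuousLinearMap.coe_coe,
        LinearMap.coe_comp, Function.comp_apply, LinearMap.coe_toContinuousLinearMap, LinearMap.coe_toContinuousLinearMap',
        Matrix.toLin'_apply, ContinuousLinearMap.coe_sum,
        ContinuousLinearMap.coe_smul, ContinuousLinearMap.coe_neg, ContinuousLinearMap.coe_add,
        LinearMap.neg_apply, LinearMap.smul_apply, LinearMap.sum_apply, LinearMap.add_apply,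
        LinearMap.proj_apply, smul_eq_mul, hpt0, hpt1, ContinuousLinearMap.proj_apply,
        Pi.single_apply, Jb, Matrix.mulVec, dotProduct, Fin.sum_univ_two,
        Matrix.cons_val', Matrix.cons_val_zero, Matrix.cons_val_one, Matrix.head_cons,
        Matrix.of_apply, Matrix.empty_val', Matrix.cons_val_fin_one, Matrix.head_fin_const,
        Real.exp_neg, inv_inv, mul_one, mul_zero, add_zero, zero_add, zero_mul,
        Fin.ext_iff, Fin.val_zero, Fin.val_one, Fin.isValue, reduceIte, Nat.one_ne_zero, one_ne_zero, zero_ne_one, ite_true, ite_false]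
      simp only [hval1, hA2.deriv, Real.exp_neg, inv_inv, zero_mul, zero_sub]
      rw [hL11]
      field_simp [Real.exp_ne_zero]
      have hextra : ∑ x, Real.exp b ^ 2 * q x ^ 2 / (p x + Real.exp b * q x) ^ 2
          + Real.exp b * ∑ x, -(Real.exp b * q x ^ 2 / (p x + Real.exp b * q x) ^ 2) = 0 := by
        rw [Finset.mul_sum, ← Finset.sum_add_distrib]
        exact Finset.sum_eq_zero fun x _ => by ring
      linear_combination hextra
end

section
/- The second eigenvalue of the Jacobian at a fixed point of the two-dimensional SUCPA map, μ = α_1'(b) - e^b α_2'(b), satisfies 0 ≤ μ < 1. -/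
open Real Finset Filter

theorem second_eigenvalue_bounds {N : ℕ} (N1 N2 : ℕ) (hN1 : 0 < N1) (hN2 : 0 < N2)
    (hN : N1 + N2 = N) (p q : Fin N → ℝ) (hp : ∀ i, 0 < p i) (hq : ∀ i, 0 < q i)
    (hpq : ∀ i, p i + q i = 1) (b : ℝ) (hb : alpha1 N1 p q b = 1) :
    0 ≤ deriv (alpha1 N1 p q) b - Real.exp b * deriv (alpha2 N2 p q) b ∧
    deriv (alpha1 N1 p q) b - Real.exp b * deriv (alpha2 N2 p q) b < 1 := by
  have hE : (0:ℝ) < Real.exp b := Real.exp_pos b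
  have hd : ∀ i, 0 < p i + q i * Real.exp b := fun i => add_pos (hp i) (mul_pos (hq i) hE)
  have hN1r : (0:ℝ) < (N1:ℝ) := by exact_mod_cast hN1
  have hN2r : (0:ℝ) < (N2:ℝ) := by exact_mod_cast hN2
  set t : Fin N → ℝ := fun i => q i * Real.exp b / (p i + q i * Real.exp b) with ht
  have ht0 : ∀ i, 0 < t i := fun i => div_pos (mul_pos (hq i) hE) (hd i)
  have ht1 : ∀ i, t i < 1 := fun i => (div_lt_one (hd i)).2 (by linarith [hp i])
  have hpd : ∀ i, p i / (p i + q i * Real.exp b) = 1 - t i := by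
    intro i
    rw [ht, eq_sub_iff_add_eq, ← add_div, div_eq_one_iff_eq (hd i).ne']
  -- derivatives
  have hden : ∀ i : Fin N, HasDerivAt (fun x => p i + q i * Real.exp x) (q i * Real.exp b) b :=
    fun i => ((Real.hasDerivAt_exp b).const_mul (q i)).const_add (p i)
  have hder1 : HasDerivAt (alpha1 N1 p q)
      ((1/(N1:ℝ)) * ∑ i, (0 * (p i + q i * Real.exp b) - p i * (q i * Real.exp b)) /
        (p i + q i * Real.exp b)^2) b := by
    apply HasDerivAt.const_mul
    apply HasDerivAt.fun_sum
    intro i _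
    exact (hasDerivAt_const b (p i)).div (hden i) (hd i).ne'
  have hder2 : HasDerivAt (alpha2 N2 p q)
      ((1/(N2:ℝ)) * ∑ i, (0 * (p i + q i * Real.exp b) - q i * (q i * Real.exp b)) /
        (p i + q i * Real.exp b)^2) b := by
    apply HasDerivAt.const_mul
    apply HasDerivAt.fun_sum
    intro i _
    exact (hasDerivAt_const b (q i)).div (hden i) (hd i).ne'
  rw [hder1.deriv, hder2.deriv]
  -- rewrite sums in terms of t
  have hs1 : ∑ i, (0 * (p i + q i * Real.exp b) - p i * (q i * Real.exp b)) /
      (p i + q i * Real.exp b)^2 = -∑ i, (1 - t i) * t i := by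
    rw [← Finset.sum_neg_distrib]
    refine Finset.sum_congr rfl fun i _ => ?_
    rw [← hpd i, ht]
    field_simp
    ring
  have hs2 : ∑ i, (0 * (p i + q i * Real.exp b) - q i * (q i * Real.exp b)) /
      (p i + q i * Real.exp b)^2 = -(∑ i, t i ^ 2) / Real.exp b := by
    rw [← Finset.sum_neg_distrib, Finset.sum_div]
    refine Finset.sum_congr rfl fun i _ => ?_
    have hti : t i = q i * Real.exp b / (p i + q i * Real.exp b) := rfl
    rw [hti, div_pow, ← neg_div, div_div, div_eq_div_iff (pow_ne_zero 2 (hd i).ne') (mul_ne_zero (pow_ne_zero 2 (hd i).ne') hE.ne')]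
    ring
  rw [hs1, hs2]
  -- sum of t equals N2
  have hA : ∑ i, t i = (N2:ℝ) := by
    unfold alpha1 at hb
    have h1 : ∑ i, p i / (p i + q i * Real.exp b) = (N1:ℝ) := by
      field_simp at hb
      linarith [hb]
    rw [Finset.sum_congr rfl (fun i _ => hpd i), Finset.sum_sub_distrib,
      Finset.sum_const, Finset.card_univ, Fintype.card_fin] at h1
    have : (N:ℝ) = (N1:ℝ) + (N2:ℝ) := by exact_mod_cast hN.symm
    simp only [nsmul_eq_mul, mul_one] at h1
    linarith
  set B := ∑ i, t i ^ 2 with hB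
  have hBpos : 0 ≤ B := Finset.sum_nonneg fun i _ => sq_nonneg _
  have hNne : Nonempty (Fin N) := ⟨⟨0, by omega⟩⟩
  have hBA : B < (N2:ℝ) := by
    rw [← hA, hB]
    exact Finset.sum_lt_sum_of_nonempty Finset.univ_nonempty fun i _ => by
      nlinarith [ht0 i, ht1 i]
  have hCS : ((N2:ℝ))^2 ≤ ((N1:ℝ) + (N2:ℝ)) * B := by
    have := sq_sum_le_card_mul_sum_sq (s := (Finset.univ : Finset (Fin N))) (f := t)
    rw [hA, Finset.card_univ, Fintype.card_fin] at this
    have hNcast : ((N:ℕ):ℝ) = (N1:ℝ) + (N2:ℝ) := by exact_mod_cast hN.symm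
    calc ((N2:ℝ))^2 ≤ (N:ℝ) * B := by exact_mod_cast this
      _ = ((N1:ℝ) + (N2:ℝ)) * B := by rw [hNcast]
  -- the eigenvalue expression
  have hsum1 : ∑ i, (1 - t i) * t i = (N2:ℝ) - B := by
    rw [hB, ← hA, ← Finset.sum_sub_distrib]
    exact Finset.sum_congr rfl fun i _ => by ring
  rw [hsum1]
  have hmu : (1/(N1:ℝ)) * -((N2:ℝ) - B) - Real.exp b * ((1/(N2:ℝ)) * (-B / Real.exp b))
      = B / (N2:ℝ) - ((N2:ℝ) - B) / (N1:ℝ) := by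
    field_simp
    ring
  rw [hmu]
  constructor
  · have key : 0 ≤ B * (N1:ℝ) + B * (N2:ℝ) - (N2:ℝ)^2 := by nlinarith
    have heq : B / (N2:ℝ) - ((N2:ℝ) - B) / (N1:ℝ)
        = (B * (N1:ℝ) + B * (N2:ℝ) - (N2:ℝ)^2) / ((N1:ℝ) * (N2:ℝ)) := by
      field_simp
      ring
    rw [heq]
    exact div_nonneg key (by positivity)
  · have h1 : B / (N2:ℝ) < 1 := (div_lt_one hN2r).2 hBA
    have h2 : 0 ≤ ((N2:ℝ) - B) / (N1:ℝ) := div_nonneg (by linarith) hN1r.le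
    linarith
end

section
/- The vector v = (N_2, -N_1) is an eigenvector of the Jacobian matrix J_b = [[1+α_1'(b), -α_1'(b)],[1+e^bα_2'(b), -e^bα_2'(b)]] corresponding to the eigenvalue μ = α_1'(b) - e^b α_2'(b). In particular the anti-diagonal entries of J_b satisfy N_1 J_{1,2} = N_2 J_{2,1}, i.e., -N_1 α_1'(b) = N_2 (1 + e^b α_2'(b)). -/
open Real Finset Filter

lemma hasDerivAt_term (n a c x : ℝ) (hd : a + c * Real.exp x ≠ 0) :
    HasDerivAt (fun y => n / (a + c * Real.exp y))
      (-(n * (c * Real.exp x)) / (a + c * Real.exp x) ^ 2) x := by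
  have h := (((Real.hasDerivAt_exp x).const_mul c).const_add a).inv hd
  have h2 := h.const_mul n
  convert h2 using 1
  · rfl
  · rfl
  · funext y; simp [div_eq_mul_inv]
  · ring

lemma deriv_sum_term {N : ℕ} (n p q : Fin N → ℝ) (x : ℝ)
    (hd : ∀ i, p i + q i * Real.exp x ≠ 0) (c : ℝ) :
    HasDerivAt (fun y => c * ∑ i, n i / (p i + q i * Real.exp y))
      (c * ∑ i, -(n i * (q i * Real.exp x)) / (p i + q i * Real.exp x) ^ 2) x := by
  exact (HasDerivAt.fun_sum (fun i _ => hasDerivAt_term (n i) (p i) (q i) x (hd i))).const_mul c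

theorem eigenvector_of_Jb {N : ℕ} (N1 N2 : ℕ) (hN1 : 0 < N1) (hN2 : 0 < N2)
    (hN : N1 + N2 = N) (p q : Fin N → ℝ) (hp : ∀ i, 0 < p i) (hq : ∀ i, 0 < q i)
    (hpq : ∀ i, p i + q i = 1) (b : ℝ) (hb : alpha1 N1 p q b = 1) :
    (!![1 + deriv (alpha1 N1 p q) b, -(deriv (alpha1 N1 p q) b);
        1 + Real.exp b * deriv (alpha2 N2 p q) b,
        -(Real.exp b * deriv (alpha2 N2 p q) b)]).mulVec ![(N2 : ℝ), -(N1 : ℝ)] =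
      (deriv (alpha1 N1 p q) b - Real.exp b * deriv (alpha2 N2 p q) b) •
        ![(N2 : ℝ), -(N1 : ℝ)] ∧
    -(N1 : ℝ) * deriv (alpha1 N1 p q) b =
      (N2 : ℝ) * (1 + Real.exp b * deriv (alpha2 N2 p q) b) := by
  have hD : ∀ i, 0 < p i + q i * Real.exp b := fun i =>
    add_pos (hp i) (mul_pos (hq i) (Real.exp_pos b))
  have hDne : ∀ i, p i + q i * Real.exp b ≠ 0 := fun i => (hD i).ne'
  have hN1' : (N1 : ℝ) ≠ 0 := Nat.cast_ne_zero.mpr hN1.ne'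
  have hN2' : (N2 : ℝ) ≠ 0 := Nat.cast_ne_zero.mpr hN2.ne'
  -- derivatives
  have h1 : deriv (alpha1 N1 p q) b
      = (1 / (N1 : ℝ)) * ∑ i, -(p i * (q i * Real.exp b)) / (p i + q i * Real.exp b) ^ 2 :=
    (deriv_sum_term p p q b hDne _).deriv
  have h2 : deriv (alpha2 N2 p q) b
      = (1 / (N2 : ℝ)) * ∑ i, -(q i * (q i * Real.exp b)) / (p i + q i * Real.exp b) ^ 2 :=
    (deriv_sum_term q p q b hDne _).deriv
  have hsum : ∑ i, p i / (p i + q i * Real.exp b) = (N1 : ℝ) := by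
    simp only [alpha1] at hb
    field_simp at hb
    linarith
  have hNc : (N : ℝ) = (N1 : ℝ) + (N2 : ℝ) := by exact_mod_cast hN.symm
  have e1 : (N1 : ℝ) * deriv (alpha1 N1 p q) b
      = ∑ i, -(p i * (q i * Real.exp b)) / (p i + q i * Real.exp b) ^ 2 := by
    rw [h1]; field_simp
    exact Finset.sum_congr rfl fun i _ => by ring
  have e2 : (N2 : ℝ) * deriv (alpha2 N2 p q) b
      = ∑ i, -(q i * (q i * Real.exp b)) / (p i + q i * Real.exp b) ^ 2 := by
    rw [h2]; field_simp
    exact Finset.sum_congr rfl fun i _ => by ring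
  have termeq : ∀ i, -(p i * (q i * Real.exp b)) / (p i + q i * Real.exp b) ^ 2
      + Real.exp b * (-(q i * (q i * Real.exp b)) / (p i + q i * Real.exp b) ^ 2)
      = p i / (p i + q i * Real.exp b) - 1 := by
    intro i
    have h := hDne i
    field_simp
    ring
  have key : (N1 : ℝ) * deriv (alpha1 N1 p q) b
      + Real.exp b * ((N2 : ℝ) * deriv (alpha2 N2 p q) b) = -(N2 : ℝ) := by
    rw [e1, e2, Finset.mul_sum, ← Finset.sum_add_distrib]
    rw [Finset.sum_congr rfl (fun i _ => termeq i), Finset.sum_sub_distrib, hsum]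
    simp [hNc]
  constructor
  · funext i
    fin_cases i <;>
      simp [Matrix.mulVec, dotProduct] <;>
      linear_combination key
  · linear_combination -key
end

section
/- In the two-class case, if along an orbit the increments Δ_1(t), Δ_2(t) are not both zero, then they have opposite signs (Δ_1(t)·Δ_2(t) < 0); this follows from the identity N_1 e^{-Δ_1(t)} + N_2 e^{-Δ_2(t)} = N with N = N_1 + N_2. -/
open Real Finset Filter

theorem increments_opposite_signs {N : ℕ} (N1 N2 : ℕ) (hN1 : 0 < N1) (hN2 : 0 < N2)
    (hN : N1 + N2 = N) (p q : Fin N → ℝ) (hp : ∀ i, 0 < p i) (hq : ∀ i, 0 < q i)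
    (hpq : ∀ i, p i + q i = 1) (β : Fin 2 → ℝ)
    (Δ1 Δ2 : ℝ) (hΔ1 : Δ1 = sucpa2 N1 N2 p q β 0 - β 0)
    (hΔ2 : Δ2 = sucpa2 N1 N2 p q β 1 - β 1)
    (hne : ¬(Δ1 = 0 ∧ Δ2 = 0)) :
    Δ1 * Δ2 < 0 := by
  have hN1' : (0:ℝ) < N1 := by exact_mod_cast hN1
  have hN2' : (0:ℝ) < N2 := by exact_mod_cast hN2
  set a := Real.exp (β 0) with ha
  set b := Real.exp (β 1) with hb
  have hD : ∀ i : Fin N, 0 < p i * a + q i * b := fun i => by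
    have := hp i; have := hq i; have := Real.exp_pos (β 0); have := Real.exp_pos (β 1)
    positivity
  have hNe : (Finset.univ : Finset (Fin N)).Nonempty :=
    ⟨⟨0, by omega⟩, Finset.mem_univ _⟩
  set S1 := (1 / (N1 : ℝ)) * ∑ i, p i / (p i * a + q i * b) with hS1
  set S2 := (1 / (N2 : ℝ)) * ∑ i, q i / (p i * a + q i * b) with hS2
  have hS1pos : 0 < S1 := by
    apply mul_pos (by positivity)
    exact Finset.sum_pos (fun i _ => div_pos (hp i) (hD i)) hNe
  have hS2pos : 0 < S2 := by
    apply mul_pos (by positivity)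
    exact Finset.sum_pos (fun i _ => div_pos (hq i) (hD i)) hNe
  have h0 : sucpa2 N1 N2 p q β 0 = -Real.log S1 := by
    simp [sucpa2, hS1, ha, hb]
  have h1 : sucpa2 N1 N2 p q β 1 = -Real.log S2 := by
    simp [sucpa2, hS2, ha, hb]
  have e1 : Real.exp (-Δ1) = S1 * a := by
    have : -Δ1 = Real.log S1 + β 0 := by rw [hΔ1, h0]; ring
    rw [this, Real.exp_add, Real.exp_log hS1pos]
  have e2 : Real.exp (-Δ2) = S2 * b := by
    have : -Δ2 = Real.log S2 + β 1 := by rw [hΔ2, h1]; ring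
    rw [this, Real.exp_add, Real.exp_log hS2pos]
  have key : (N1:ℝ) * Real.exp (-Δ1) + (N2:ℝ) * Real.exp (-Δ2) = (N1:ℝ) + N2 := by
    rw [e1, e2]
    calc (N1:ℝ) * (S1 * a) + (N2:ℝ) * (S2 * b)
        = (∑ i, p i / (p i * a + q i * b)) * a
          + (∑ i, q i / (p i * a + q i * b)) * b := by
          rw [hS1, hS2]; linear_combination (∑ i, p i / (p i * a + q i * b)) * a * mul_one_div_cancel hN1'.ne' + (∑ i, q i / (p i * a + q i * b)) * b * mul_one_div_cancel hN2'.ne'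
      _ = ∑ i, (p i * a / (p i * a + q i * b) + q i * b / (p i * a + q i * b)) := by
          rw [Finset.sum_add_distrib, Finset.sum_mul, Finset.sum_mul]
          congr 1 <;> (apply Finset.sum_congr rfl; intros; ring)
      _ = ∑ _i : Fin N, (1:ℝ) := by
          apply Finset.sum_congr rfl
          intro i _
          rw [← add_div, div_self (hD i).ne']
      _ = (N1:ℝ) + N2 := by
          simp [← hN]
  by_contra hcon
  push_neg at hcon
  rcases mul_nonneg_iff.mp hcon with ⟨h1', h2'⟩ | ⟨h1', h2'⟩
  · -- both nonneg
    have le1 : Real.exp (-Δ1) ≤ 1 := Real.exp_le_one_iff.mpr (by linarith)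
    have le2 : Real.exp (-Δ2) ≤ 1 := Real.exp_le_one_iff.mpr (by linarith)
    have hstrict : Real.exp (-Δ1) < 1 ∨ Real.exp (-Δ2) < 1 := by
      rcases not_and_or.mp hne with hz | hz
      · exact Or.inl (Real.exp_lt_one_iff.mpr (by
          have : 0 < Δ1 := lt_of_le_of_ne h1' (Ne.symm hz); linarith))
      · exact Or.inr (Real.exp_lt_one_iff.mpr (by
          have : 0 < Δ2 := lt_of_le_of_ne h2' (Ne.symm hz); linarith))
    rcases hstrict with h | h
    · nlinarith [mul_lt_mul_of_pos_left h hN1', mul_le_mul_of_nonneg_left le2 hN2'.le]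
    · nlinarith [mul_lt_mul_of_pos_left h hN2', mul_le_mul_of_nonneg_left le1 hN1'.le]
  · -- both nonpos
    have le1 : 1 ≤ Real.exp (-Δ1) := Real.one_le_exp (by linarith)
    have le2 : 1 ≤ Real.exp (-Δ2) := Real.one_le_exp (by linarith)
    have hstrict : 1 < Real.exp (-Δ1) ∨ 1 < Real.exp (-Δ2) := by
      rcases not_and_or.mp hne with hz | hz
      · exact Or.inl (Real.one_lt_exp_iff.mpr (by
          have : Δ1 < 0 := lt_of_le_of_ne h1' hz; linarith))
      · exact Or.inr (Real.one_lt_exp_iff.mpr (by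
          have : Δ2 < 0 := lt_of_le_of_ne h2' hz; linarith))
    rcases hstrict with h | h
    · nlinarith [mul_lt_mul_of_pos_left h hN1', mul_le_mul_of_nonneg_left le2 hN2'.le]
    · nlinarith [mul_lt_mul_of_pos_left h hN2', mul_le_mul_of_nonneg_left le1 hN1'.le]
end
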